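/- Let G be a countable discrete group acting by homeomorphisms on a locally compact Hausdorff topological space X such that the orbit space X/G is a T1 space. Then every orbit Gx is a discrete subset of X. -/

import Mathlib

/-- A nonempty countable T1 Baire space has an isolated point. -/
lemma exists_isolated {Y : Type*} [TopologicalSpace Y] [Countable Y] [T1Space Y]
    [BaireSpace Y] [Nonempty Y] : ∃ y : Y, IsOpen ({y} : Set Y) := by
  have hcov : (⋃ y : Y, ({y} : Set Y)) = Set.univ := by
    ext z; simp
  have hd : Dense (⋃ y : Y, interior ({y} : Set Y)) :=
    dense_iUnion_interior_of_closed (fun y => isClosed_singleton) hcov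
  obtain ⟨z, hz⟩ := hd.nonempty
  obtain ⟨y, hy⟩ := Set.mem_iUnion.1 hz
  refine ⟨y, ?_⟩
  have hsub : interior ({y} : Set Y) ⊆ {y} := interior_subset
  have : interior ({y} : Set Y) = {y} := by
    apply Set.Subset.antisymm hsub
    intro w hw
    rcases hsub hy with rfl
    rcases hw with rfl
    exact hy
  rw [← this]; exact isOpen_interior

/-- A countable discrete group acting on a locally compact Hausdorff space with T1 orbit
space has discrete orbits. -/
theorem stmt1 {G X : Type*} [Group G] [Countable G] [TopologicalSpace X]
    [LocallyCompactSpace X] [T2Space X] [MulAction G X] [ContinuousConstSMul G X]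
    [T1Space (Quotient (MulAction.orbitRel G X))] :
    ∀ x : X, DiscreteTopology ↥(MulAction.orbit G x) := by
  intro x
  -- the orbit is closed
  have horb : MulAction.orbit G x =
      Quotient.mk (MulAction.orbitRel G X) ⁻¹' {Quotient.mk _ x} := by
    ext y
    simp only [Set.mem_preimage, Set.mem_singleton_iff, Quotient.eq]
    constructor
    · intro h
      exact (MulAction.orbitRel_apply (G := G)).2 h
    · intro h
      exact (MulAction.orbitRel_apply (G := G)).1 h
  have hclosed : IsClosed (MulAction.orbit G x) := by
    rw [horb]
    exact (isClosed_singleton).preimage continuous_quotient_mk'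
  haveI : LocallyCompactSpace ↥(MulAction.orbit G x) := hclosed.locallyCompactSpace
  haveI : Countable ↥(MulAction.orbit G x) :=
    (Set.countable_range (fun g : G => g • x)).to_subtype
  haveI : Nonempty ↥(MulAction.orbit G x) := ⟨⟨x, MulAction.mem_orbit_self x⟩⟩
  obtain ⟨y₀, hy₀⟩ := exists_isolated (Y := ↥(MulAction.orbit G x))
  -- get an open set in X isolating y₀ within the orbit
  rw [isOpen_induced_iff] at hy₀
  obtain ⟨U, hU, hUy⟩ := hy₀
  rw [discreteTopology_iff_isOpen_singleton]
  intro z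
  obtain ⟨g, hg'⟩ := y₀.2
  obtain ⟨h, hh'⟩ := z.2
  have hg : g • x = (y₀ : X) := hg'
  have hh : h • x = (z : X) := hh' 
  set k : G := h * g⁻¹ with hk
  have hkz : k • (y₀ : X) = (z : X) := by
    rw [hk, ← hg, ← hh, smul_smul, mul_assoc, inv_mul_cancel, mul_one]
  rw [isOpen_induced_iff]
  refine ⟨(fun w => k⁻¹ • w) ⁻¹' U, (continuous_const_smul k⁻¹).isOpen_preimage U hU, ?_⟩
  ext w
  simp only [Set.mem_preimage, Set.mem_singleton_iff]
  constructor
  · intro hw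
    have hmem : k⁻¹ • (w : X) ∈ MulAction.orbit G x := by
      obtain ⟨g', hgw'⟩ := w.2
      have hgw : g' • x = (w : X) := hgw'
      exact ⟨k⁻¹ * g', by show (k⁻¹ * g') • x = _; rw [mul_smul, hgw]⟩
    have : (⟨k⁻¹ • (w : X), hmem⟩ : ↥(MulAction.orbit G x)) ∈
        (Subtype.val ⁻¹' U : Set ↥(MulAction.orbit G x)) := hw
    rw [hUy, Set.mem_singleton_iff] at this
    have hval : k⁻¹ • (w : X) = (y₀ : X) := congrArg Subtype.val this
    have : (w : X) = (z : X) := by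
      rw [← hkz, ← hval, smul_smul, mul_inv_cancel, one_smul]
    exact Subtype.ext this
  · intro hw
    show k⁻¹ • (w : X) ∈ U
    have hwz : (w : X) = (z : X) := congrArg Subtype.val hw
    have : k⁻¹ • (w : X) = (y₀ : X) := by rw [hwz, ← hkz, inv_smul_smul]
    rw [this]
    have : y₀ ∈ (Subtype.val ⁻¹' U : Set ↥(MulAction.orbit G x)) := by
      rw [hUy]; exact rfl
    exact this
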